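/- arXiv:math-ph/0201058 — 2 statements merged into one kernel-verified Lean document; each statement's English description precedes it below -/
import Mathlib

section
/- Every bireal biquaternion of norm 1 whose scalar part has positive real part can be written as exp((i y/2)·b) = cosh(y/2) + i·sinh(y/2)·b for some real y and real unit vector quaternion b. -/
/-- Embedding of the real quaternions into the biquaternions (complexified quaternions). -/
noncomputable def toB (q : Quaternion ℝ) : Quaternion ℂ :=
  ⟨(q.re : ℂ), (q.imI : ℂ), (q.imJ : ℂ), (q.imK : ℂ)⟩

/-- Componentwise complex (imaginary) conjugation of a biquaternion. -/
noncomputable def cstar (q : Quaternion ℂ) : Quaternion ℂ :=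
  ⟨star q.re, star q.imI, star q.imJ, star q.imK⟩

/-- Biconjugation: quaternion conjugation composed with complex conjugation. -/
noncomputable def biconj (q : Quaternion ℂ) : Quaternion ℂ := cstar (star q)

private lemma mynorm (q : Quaternion ℝ) (h : q.re^2+q.imI^2+q.imJ^2+q.imK^2 = 1) :
    ‖q‖ = 1 := by
  have h2 := Quaternion.normSq_eq_norm_mul_self q
  rw [Quaternion.normSq_def'] at h2
  nlinarith [norm_nonneg q]

/-- Every bireal biquaternion of norm 1 whose scalar part has positive real part is a
boost-spinor: B = cosh(y/2) + i·sinh(y/2)·b for some rapidity y and real unit vector b. -/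
theorem stmt6 (B : Quaternion ℂ) (hbireal : biconj B = B) (hnorm : B * star B = 1)
    (hpos : 0 < B.re.re) :
    ∃ (y : ℝ) (b : Quaternion ℝ), b.re = 0 ∧ ‖b‖ = 1 ∧
      B = (((Real.cosh (y / 2) : ℝ) : ℂ) : Quaternion ℂ)
          + (Complex.I * ((Real.sinh (y / 2) : ℝ) : ℂ)) • toB b := by
  -- component equations from bireality
  have h1 := congrArg QuaternionAlgebra.re hbireal
  have h2 := congrArg QuaternionAlgebra.imI hbireal
  have h3 := congrArg QuaternionAlgebra.imJ hbireal
  have h4 := congrArg QuaternionAlgebra.imK hbireal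
  simp [biconj, cstar, Complex.ext_iff] at h1 h2 h3 h4
  have hre : B.re.im = 0 := by linarith [h1]
  have hI : B.imI.re = 0 := by linarith [h2]
  have hJ : B.imJ.re = 0 := by linarith [h3]
  have hK : B.imK.re = 0 := by linarith [h4]
  obtain ⟨a, ha⟩ : ∃ a : ℝ, B.re.re = a := ⟨_, rfl⟩
  obtain ⟨v1, hv1⟩ : ∃ v : ℝ, B.imI.im = v := ⟨_, rfl⟩
  obtain ⟨v2, hv2⟩ : ∃ v : ℝ, B.imJ.im = v := ⟨_, rfl⟩
  obtain ⟨v3, hv3⟩ : ∃ v : ℝ, B.imK.im = v := ⟨_, rfl⟩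
  have e1 : B.re = ((a : ℝ) : ℂ) := by apply Complex.ext <;> simp [hre, ha]
  have e2 : B.imI = Complex.I * ((v1 : ℝ) : ℂ) := by
    apply Complex.ext <;> simp [hI, hv1]
  have e3 : B.imJ = Complex.I * ((v2 : ℝ) : ℂ) := by
    apply Complex.ext <;> simp [hJ, hv2]
  have e4 : B.imK = Complex.I * ((v3 : ℝ) : ℂ) := by
    apply Complex.ext <;> simp [hK, hv3]
  rw [ha] at hpos
  -- norm equation
  rw [Quaternion.self_mul_star] at hnorm
  have hn : Quaternion.normSq B = 1 := by
    have := congrArg QuaternionAlgebra.re hnorm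
    simpa [Quaternion.re_one] using this
  rw [Quaternion.normSq_def'] at hn
  have hn' : a^2 - v1^2 - v2^2 - v3^2 = 1 := by
    have := congrArg Complex.re hn
    rw [e1, e2, e3, e4] at this
    simp [pow_two, Complex.mul_re] at this
    nlinarith [this]
  clear hbireal hnorm hn h1 h2 h3 h4 hre hI hJ hK ha hv1 hv2 hv3
  by_cases hz : v1^2 + v2^2 + v3^2 = 0
  · -- trivial boost
    have hv1z : v1 = 0 := by nlinarith [sq_nonneg v1, sq_nonneg v2, sq_nonneg v3]
    have hv2z : v2 = 0 := by nlinarith [sq_nonneg v1, sq_nonneg v2, sq_nonneg v3]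
    have hv3z : v3 = 0 := by nlinarith [sq_nonneg v1, sq_nonneg v2, sq_nonneg v3]
    have haz : a = 1 := by nlinarith
    subst hv1z hv2z hv3z haz
    refine ⟨0, ⟨0, 1, 0, 0⟩, rfl, mynorm _ (by norm_num), ?_⟩
    refine QuaternionAlgebra.ext ?_ ?_ ?_ ?_ <;>
      simp [e1, e2, e3, e4, Quaternion.re_one, Quaternion.imI_one, Quaternion.imJ_one, Quaternion.imK_one]
  · have hs0 : 0 < v1^2 + v2^2 + v3^2 := by positivity
    obtain ⟨s, hsdef⟩ : ∃ s : ℝ, Real.sqrt (v1^2 + v2^2 + v3^2) = s := ⟨_, rfl⟩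
    have hs : 0 < s := hsdef ▸ Real.sqrt_pos.mpr hs0
    have hs2 : s^2 = v1^2 + v2^2 + v3^2 := by
      rw [← hsdef]; exact Real.sq_sqrt hs0.le
    have hsne : s ≠ 0 := hs.ne'
    refine ⟨2 * Real.arsinh s, ⟨0, v1/s, v2/s, v3/s⟩, rfl, ?_, ?_⟩
    · apply mynorm
      field_simp
      linarith [hs2]
    · have hy : 2 * Real.arsinh s / 2 = Real.arsinh s := by ring
      rw [hy, Real.sinh_arsinh, Real.cosh_arsinh]
      have hsq : Real.sqrt (1 + s^2) = a := by
        rw [show 1 + s^2 = a^2 by nlinarith]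
        exact Real.sqrt_sq hpos.le
      rw [hsq]
      have hsC : (s : ℂ) ≠ 0 := by exact_mod_cast hsne
      refine QuaternionAlgebra.ext ?_ ?_ ?_ ?_ <;>
        simp only [Quaternion.re_add, Quaternion.imI_add,
          Quaternion.imJ_add, Quaternion.imK_add,
          Quaternion.re_smul, Quaternion.imI_smul,
          Quaternion.imJ_smul, Quaternion.imK_smul,
          Quaternion.re_coe, Quaternion.imI_coe,
          Quaternion.imJ_coe, Quaternion.imK_coe,
          smul_eq_mul, e1, e2, e3, e4] <;> simp only [toB]
      · push_cast; ring
      · push_cast; field_simp; ring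
      · push_cast; field_simp; ring
      · push_cast; field_simp; ring
end

section
/- For any biquaternion Q with nonzero norm N(Q) = Q·conj(Q) ∈ ℂ \ {0}, there exist a complex number c, a real quaternion R with ‖R‖ = 1, and a bireal biquaternion B with B·conj(B) = 1, such that Q = c·R·B. -/
lemma cstar_re (q : Quaternion ℂ) : (cstar q).re = star q.re := rfl

lemma cstar_imI (q : Quaternion ℂ) : (cstar q).imI = star q.imI := rfl

lemma cstar_imJ (q : Quaternion ℂ) : (cstar q).imJ = star q.imJ := rfl

lemma cstar_imK (q : Quaternion ℂ) : (cstar q).imK = star q.imK := rfl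

lemma toB_re (q : Quaternion ℝ) : (toB q).re = (q.re : ℂ) := rfl

lemma toB_imI (q : Quaternion ℝ) : (toB q).imI = (q.imI : ℂ) := rfl

lemma toB_imJ (q : Quaternion ℝ) : (toB q).imJ = (q.imJ : ℂ) := rfl

lemma toB_imK (q : Quaternion ℝ) : (toB q).imK = (q.imK : ℂ) := rfl

lemma star_smul' (z : ℂ) (X : Quaternion ℂ) : star (z • X) = z • star X := by
  ext <;> simp [Quaternion.re_smul, Quaternion.imI_smul, Quaternion.imJ_smul,
    Quaternion.imK_smul, smul_eq_mul, mul_neg]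

lemma smul_mul_smul'' (z w : ℂ) (X Y : Quaternion ℂ) :
    (z • X) * (w • Y) = (z * w) • (X * Y) := by
  ext <;> simp [Quaternion.re_mul, Quaternion.imI_mul, Quaternion.imJ_mul, Quaternion.imK_mul,
    Quaternion.re_smul, Quaternion.imI_smul, Quaternion.imJ_smul, Quaternion.imK_smul,
    smul_eq_mul] <;> ring

lemma coe_mul_eq_smul' (z : ℂ) (X : Quaternion ℂ) : (z : Quaternion ℂ) * X = z • X := by
  ext <;> simp [Quaternion.re_mul, Quaternion.imI_mul, Quaternion.imJ_mul, Quaternion.imK_mul,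
    Quaternion.re_coe, Quaternion.imI_coe, Quaternion.imJ_coe, Quaternion.imK_coe,
    Quaternion.re_smul, Quaternion.imI_smul, Quaternion.imJ_smul, Quaternion.imK_smul,
    smul_eq_mul]

lemma smul_coe' (z w : ℂ) : z • ((w : Quaternion ℂ)) = ((z * w : ℂ) : Quaternion ℂ) := by
  ext <;> simp [Quaternion.re_coe, Quaternion.imI_coe, Quaternion.imJ_coe, Quaternion.imK_coe,
    Quaternion.re_smul, Quaternion.imI_smul, Quaternion.imJ_smul, Quaternion.imK_smul,
    smul_eq_mul]

lemma biconj_real_smul (r : ℝ) (X : Quaternion ℂ) :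
    biconj ((r : ℂ) • X) = (r : ℂ) • biconj X := by
  ext <;> simp only [biconj, cstar_re, cstar_imI, cstar_imJ, cstar_imK, Quaternion.re_smul, Quaternion.imI_smul, Quaternion.imJ_smul,
    Quaternion.imK_smul, Quaternion.re_star, Quaternion.imI_star, Quaternion.imJ_star,
    Quaternion.imK_star, smul_eq_mul, map_mul, Complex.conj_ofReal, map_neg, mul_neg] <;>
    simp [Complex.star_def]


lemma bireal_key (X : Quaternion ℂ)
    (hab : X.re.re * X.re.im + X.imI.re * X.imI.im + X.imJ.re * X.imJ.im
      + X.imK.re * X.imK.im = 0) :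
    biconj (star (toB ⟨X.re.re, X.imI.re, X.imJ.re, X.imK.re⟩) * X)
      = star (toB ⟨X.re.re, X.imI.re, X.imJ.re, X.imK.re⟩) * X := by
  ext <;>
    simp only [biconj, cstar_re, cstar_imI, cstar_imJ, cstar_imK, toB_re, toB_imI, toB_imJ, toB_imK, Quaternion.re_star, Quaternion.imI_star,
      Quaternion.imJ_star, Quaternion.imK_star, Quaternion.re_mul, Quaternion.imI_mul,
      Quaternion.imJ_mul, Quaternion.imK_mul] <;>

    rw [Complex.ext_iff] <;>
    constructor <;>
    simp only [toB, Complex.star_def, Complex.conj_re, Complex.conj_im, Complex.add_re,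
      Complex.add_im, Complex.sub_re, Complex.sub_im, Complex.neg_re, Complex.neg_im,
      Complex.mul_re, Complex.mul_im, Complex.ofReal_re, Complex.ofReal_im] <;>
    first
      | ring1
      | linarith [hab]

/-- Main decomposition theorem: every biquaternion with nonzero norm N(Q) = Q·conj(Q)
factors as Q = c·R·B with c complex, R a real unit quaternion, and B bireal of norm 1. -/
theorem stmt19 (Q : Quaternion ℂ) (hQ : Q * star Q ≠ 0) :
    ∃ (c : ℂ) (R : Quaternion ℝ) (B : Quaternion ℂ),
      ‖R‖ = 1 ∧ biconj B = B ∧ B * star B = 1 ∧ Q = c • (toB R * B) := by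
  -- the norm as a complex number
  set n : ℂ := Quaternion.normSq Q with hn_def
  have hQn : Q * star Q = (n : Quaternion ℂ) := Quaternion.self_mul_star Q
  have hn : n ≠ 0 := by
    intro h
    apply hQ
    rw [hQn, h, Quaternion.coe_zero]
  obtain ⟨c, hc⟩ := IsAlgClosed.exists_pow_nat_eq n (n := 2) (by norm_num)
  have hc0 : c ≠ 0 := by
    intro h
    rw [h] at hc
    simp at hc
    exact hn hc.symm
  -- normalized biquaternion
  set U : Quaternion ℂ := c⁻¹ • Q with hU_def
  have hUU : U * star U = 1 := by
    rw [hU_def, star_smul', smul_mul_smul'', hQn, smul_coe']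
    have h2 : c⁻¹ * c⁻¹ * n = 1 := by
      rw [← hc]
      field_simp
    rw [h2, Quaternion.coe_one]
  have hnormU : Quaternion.normSq U = 1 := by
    rw [Quaternion.normSq_def, hUU, Quaternion.re_one]
  have hUU' : star U * U = 1 := by
    rw [Quaternion.star_mul_self, hnormU, Quaternion.coe_one]
  -- the scalar norm equation for U
  have hU1 : U.re ^ 2 + U.imI ^ 2 + U.imJ ^ 2 + U.imK ^ 2 = 1 := by
    rw [← Quaternion.normSq_def', hnormU]
  -- real and imaginary parts
  rw [Complex.ext_iff] at hU1
  obtain ⟨h2r, h2i⟩ := hU1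
  simp only [pow_two, Complex.add_re, Complex.add_im, Complex.mul_re, Complex.mul_im,
    Complex.one_re, Complex.one_im] at h2r h2i
  have hab : U.re.re * U.re.im + U.imI.re * U.imI.im + U.imJ.re * U.imJ.im
      + U.imK.re * U.imK.im = 0 := by linarith
  -- the real quaternion built from real parts
  set A : Quaternion ℝ := ⟨U.re.re, U.imI.re, U.imJ.re, U.imK.re⟩ with hA_def
  set s : ℝ := U.re.re ^ 2 + U.imI.re ^ 2 + U.imJ.re ^ 2 + U.imK.re ^ 2 with hs_def
  have hspos : 0 < s := by
    nlinarith [sq_nonneg U.re.im, sq_nonneg U.imI.im, sq_nonneg U.imJ.im, sq_nonneg U.imK.im]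
  set t : ℝ := Real.sqrt s with ht_def
  have htpos : 0 < t := Real.sqrt_pos.2 hspos
  have ht2 : t * t = s := Real.mul_self_sqrt hspos.le
  have htne : t ≠ 0 := ne_of_gt htpos
  have htc : (t : ℂ) ≠ 0 := Complex.ofReal_ne_zero.2 htne
  set T : Quaternion ℂ := toB A with hT_def
  have hTs : Quaternion.normSq T = ((s : ℝ) : ℂ) := by
    rw [Quaternion.normSq_def']
    simp only [hT_def, toB, hA_def]
    rw [hs_def]
    push_cast
    ring
  have hTT : T * star T = (((s : ℝ) : ℂ) : Quaternion ℂ) := by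
    rw [Quaternion.self_mul_star, hTs]
  have hTT' : star T * T = (((s : ℝ) : ℂ) : Quaternion ℂ) := by
    rw [Quaternion.star_mul_self, hTs]
  have h6 : ((t⁻¹ : ℝ) : ℂ) * ((t⁻¹ : ℝ) : ℂ) * ((s : ℝ) : ℂ) = 1 := by
    have hsc : ((s : ℝ) : ℂ) = (t : ℂ) * (t : ℂ) := by
      rw [← ht2]; push_cast; ring
    rw [hsc]
    push_cast
    field_simp
  -- definition of B
  set M : Quaternion ℂ := star T * U with hM_def
  set B : Quaternion ℂ := ((t⁻¹ : ℝ) : ℂ) • M with hB_def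
  refine ⟨c, t⁻¹ • A, B, ?_, ?_, ?_, ?_⟩
  · -- norm of R is 1
    have hAs : ‖A‖ * ‖A‖ = s := by
      rw [← Quaternion.normSq_eq_norm_mul_self]
      rw [Quaternion.normSq_def']
    have hAn : ‖A‖ = t := by
      rw [← Real.sqrt_mul_self (norm_nonneg A), hAs]
    rw [norm_smul, hAn, Real.norm_eq_abs, abs_of_pos (inv_pos.2 htpos)]
    field_simp
  · -- B is bireal
    rw [hB_def, biconj_real_smul]
    congr 1
    rw [hM_def, hT_def, hA_def]
    exact bireal_key U hab
  · -- B * star B = 1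
    rw [hB_def, star_smul', smul_mul_smul'', hM_def, star_mul, star_star]
    have h3 : star T * U * (star U * T) = (((s : ℝ) : ℂ) : Quaternion ℂ) := by
      rw [mul_assoc, ← mul_assoc U, hUU, one_mul, hTT']
    rw [h3, smul_coe', h6, Quaternion.coe_one]
  · -- the decomposition
    have h5 : toB (t⁻¹ • A) = ((t⁻¹ : ℝ) : ℂ) • T := by
      ext <;> simp [toB_re, toB_imI, toB_imJ, toB_imK, hT_def, Quaternion.re_smul, Quaternion.imI_smul, Quaternion.imJ_smul,
        Quaternion.imK_smul, smul_eq_mul]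
    have hRB : toB (t⁻¹ • A) * B = U := by
      rw [h5, hB_def, smul_mul_smul'', hM_def, ← mul_assoc, hTT, coe_mul_eq_smul',
        smul_smul, h6, one_smul]
    rw [hRB, hU_def, smul_smul, mul_inv_cancel₀ hc0, one_smul]
end
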